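/- Let α, β, L, ω ∈ ℝ with L ≠ 0, and define V : ℝ² → ℝ by V(x, θ) = (1/2)(x − ω/L)² + (2β/L)·sin²(θ/2). If differentiable functions x, θ : ℝ → ℝ satisfy ẋ(t) = β·sin θ(t) and θ̇(t) = ω − L·x(t) − L·α·sin θ(t) for all t, then for all t the function t ↦ V(x(t), θ(t)) is differentiable with derivative d/dt V(x(t), θ(t)) = −α·β·sin²(θ(t)). Moreover, if β/L ≥ 0 then V(x, θ) ≥ 0 for all (x, θ), and if α·β ≥ 0 then d/dt V(x(t), θ(t)) ≤ 0 for all t. -/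

import Mathlib

/-- The Lyapunov function `V(x, θ) = (1/2)(x − ω/L)² + (2β/L) sin²(θ/2)` for the
classical PLL with perfect-integrator filter `H(s) = (β + αs)/s`. -/
noncomputable def pllLyapunov (β L ω : ℝ) (x θ : ℝ) : ℝ :=
  1 / 2 * (x - ω / L) ^ 2 + 2 * β / L * Real.sin (θ / 2) ^ 2

/-- Along any solution of `ẋ = β sin θ`, `θ̇ = ω − L x − L α sin θ`, the Lyapunov
function `V(x, θ) = (1/2)(x − ω/L)² + (2β/L) sin²(θ/2)` is differentiable with
derivative `−αβ sin²θ`; moreover `V ≥ 0` if `β/L ≥ 0`, and the derivative is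
`≤ 0` if `αβ ≥ 0`. -/
theorem pll_lyapunov_derivative (α β L ω : ℝ) (hL : L ≠ 0) (x θ : ℝ → ℝ)
    (hx : ∀ t : ℝ, HasDerivAt x (β * Real.sin (θ t)) t)
    (hθ : ∀ t : ℝ, HasDerivAt θ (ω - L * x t - L * α * Real.sin (θ t)) t) :
    (∀ t : ℝ, HasDerivAt (fun s => pllLyapunov β L ω (x s) (θ s))
        (-(α * β) * Real.sin (θ t) ^ 2) t) ∧
    (0 ≤ β / L → ∀ x' θ' : ℝ, 0 ≤ pllLyapunov β L ω x' θ') ∧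
    (0 ≤ α * β → ∀ t : ℝ, -(α * β) * Real.sin (θ t) ^ 2 ≤ 0) := by
  refine ⟨fun t => ?_, fun h x' θ' => ?_, fun h t => ?_⟩
  · have h1 : HasDerivAt (fun s => 1 / 2 * (x s - ω / L) ^ 2)
        (1 / 2 * (2 * (x t - ω / L) ^ 1 * (β * Real.sin (θ t)))) t := by
      exact (((hx t).sub_const (ω / L)).pow 2).const_mul (1 / 2)
    have h2 : HasDerivAt (fun s => Real.sin (θ s / 2))
        (Real.cos (θ t / 2) * ((ω - L * x t - L * α * Real.sin (θ t)) / 2)) t := by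
      exact (Real.hasDerivAt_sin _).comp t ((hθ t).div_const 2)
    have h3 : HasDerivAt (fun s => 2 * β / L * Real.sin (θ s / 2) ^ 2)
        (2 * β / L * (2 * Real.sin (θ t / 2) ^ 1 *
          (Real.cos (θ t / 2) * ((ω - L * x t - L * α * Real.sin (θ t)) / 2)))) t := by
      exact (h2.pow 2).const_mul (2 * β / L)
    have h4 := h1.add h3
    have hsin : Real.sin (θ t) = 2 * Real.sin (θ t / 2) * Real.cos (θ t / 2) := by
      rw [← Real.sin_two_mul]; ring_nf
    refine h4.congr_deriv ?_
    rw [hsin]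
    field_simp
    ring
  · unfold pllLyapunov
    have h1 : (0:ℝ) ≤ 1 / 2 * (x' - ω / L) ^ 2 := by positivity
    have h2 : 0 ≤ 2 * β / L * Real.sin (θ' / 2) ^ 2 := by
      have : 2 * β / L = 2 * (β / L) := by ring
      rw [this]; positivity
    linarith
  · have : 0 ≤ α * β * Real.sin (θ t) ^ 2 := by positivity
    nlinarith
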